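/- The group S_{pq} of normalized Vahlen matrices preserving the unit sphere acts transitively on B^{p,q} = R^{p,q} \ S^{p,q} via the Möbius action: for every x ∈ B^{p,q} there exists φ ∈ S_{pq} with φ(0) = x (namely φ_{(x,1)}). -/

import Mathlib

noncomputable section
open CliffordAlgebra

def sw (p q : ℕ) : Fin (p + q) → ℝ := fun i => if (i : ℕ) < p then 1 else -1

def Qpq (p q : ℕ) : QuadraticForm ℝ (Fin (p + q) → ℝ) :=
  QuadraticMap.weightedSumSquares ℝ (sw p q)

def Bpq (p q : ℕ) (x y : Fin (p + q) → ℝ) : ℝ :=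
  -∑ i, sw p q i * x i * y i

abbrev Cl (p q : ℕ) := CliffordAlgebra (Qpq p q)

def clConj {p q : ℕ} (x : Cl p q) : Cl p q := reverse (involute x)

def IsVec {p q : ℕ} (x : Cl p q) : Prop := ∃ v, x = ι (Qpq p q) v

def Tset (p q : ℕ) : Set (Cl p q) :=
  {x | ∃ l : List (Fin (p + q) → ℝ), x = (l.map (ι (Qpq p q))).prod}

def Gamma (p q : ℕ) : Set (Cl p q) :=
  {x | ∃ l : List (Fin (p + q) → ℝ), (∀ v ∈ l, Bpq p q v v ≠ 0) ∧
        x = (l.map (ι (Qpq p q))).prod}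

def Pin (p q : ℕ) : Set (Cl p q) :=
  {a | a ∈ Gamma p q ∧ (a * clConj a = 1 ∨ a * clConj a = -1)}

def mobius {p q : ℕ} (M : Matrix (Fin 2) (Fin 2) (Cl p q)) (x : Fin (p + q) → ℝ) : Cl p q :=
  (M 0 0 * ι (Qpq p q) x + M 0 1) * Ring.inverse (M 1 0 * ι (Qpq p q) x + M 1 1)

def InS (p q : ℕ) (M : Matrix (Fin 2) (Fin 2) (Cl p q)) : Prop :=
  ∃ α β : Cl p q, α ∈ Tset p q ∧ β ∈ Tset p q ∧ IsVec (α * reverse β) ∧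
    (α * clConj α - β * clConj β = 1 ∨ α * clConj α - β * clConj β = -1) ∧
    M = !![α, β; involute β, involute α]

lemma Qpq_single (p q : ℕ) (h : 0 < p + q) (s : ℝ) :
    Qpq p q (Pi.single (⟨0, h⟩ : Fin (p + q)) s) = sw p q ⟨0, h⟩ * (s * s) := by
  rw [Qpq, QuadraticMap.weightedSumSquares_apply]
  rw [Finset.sum_eq_single (⟨0, h⟩ : Fin (p + q))]
  · simp
  · intro i _ hi; simp [Pi.single_apply, hi]
  · simp

lemma scalar_mem_Tset (p q : ℕ) (h : 0 < p + q) (c : ℝ) (hc : 0 ≤ c) :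
    algebraMap ℝ (Cl p q) c ∈ Tset p q := by
  set s := Real.sqrt (Real.sqrt c) with hs
  set v : Fin (p + q) → ℝ := Pi.single ⟨0, h⟩ s with hv
  refine ⟨[v, v, v, v], ?_⟩
  have hsq : ι (Qpq p q) v * ι (Qpq p q) v = algebraMap ℝ _ (Qpq p q v) := ι_sq_scalar _ v
  have hQv : Qpq p q v = sw p q ⟨0, h⟩ * (s * s) := Qpq_single p q h s
  have hsw : sw p q ⟨0, h⟩ = 1 ∨ sw p q ⟨0, h⟩ = -1 := by
    unfold sw; split <;> simp
  have h1 : s * s = Real.sqrt c := Real.mul_self_sqrt (Real.sqrt_nonneg c)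
  have h2 : Real.sqrt c * Real.sqrt c = c := Real.mul_self_sqrt hc
  have h4 : Qpq p q v * Qpq p q v = c := by
    rcases hsw with hw | hw <;> rw [hQv, hw, h1] <;> nlinarith
  simp only [List.map_cons, List.map_nil, List.prod_cons, List.prod_nil, mul_one]
  calc algebraMap ℝ (Cl p q) c
      = algebraMap ℝ _ (Qpq p q v) * algebraMap ℝ _ (Qpq p q v) := by rw [← map_mul, h4]
    _ = (ι (Qpq p q) v * ι (Qpq p q) v) * (ι (Qpq p q) v * ι (Qpq p q) v) := by rw [hsq]
    _ = ι (Qpq p q) v * (ι (Qpq p q) v * (ι (Qpq p q) v * ι (Qpq p q) v)) := by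
        noncomm_ring

theorem stmt19 (p q : ℕ) (x : Fin (p + q) → ℝ) (hx : Bpq p q x x ≠ 1) :
    ∃ M, InS p q M ∧ mobius M 0 = ι (Qpq p q) x := by
  have hQB : Bpq p q x x = -Qpq p q x := by
    rw [Qpq, QuadraticMap.weightedSumSquares_apply, Bpq]
    simp [smul_eq_mul, mul_assoc]
  set t : ℝ := 1 + Qpq p q x with ht
  have htne : t ≠ 0 := by
    intro h0
    apply hx
    rw [hQB]
    have : Qpq p q x = -1 := by linarith [ht ▸ h0]
    rw [this]; norm_num
  have habs : 0 < |t| := abs_pos.mpr htne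
  have hsp : 0 < Real.sqrt |t| := Real.sqrt_pos.mpr habs
  set lam : ℝ := (Real.sqrt |t|)⁻¹ with hlam
  have hlampos : 0 < lam := inv_pos.mpr hsp
  have hlamne : lam ≠ 0 := ne_of_gt hlampos
  have hlamsq : lam * lam * |t| = 1 := by
    rw [hlam, ← mul_inv, Real.mul_self_sqrt (le_of_lt habs)]
    exact inv_mul_cancel₀ (ne_of_gt habs)
  have hnorm : lam * lam * t = 1 ∨ lam * lam * t = -1 := by
    rcases le_or_gt 0 t with hge | hlt
    · left; rwa [abs_of_nonneg hge] at hlamsq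
    · right; rw [abs_of_neg hlt] at hlamsq; linarith
  set α : Cl p q := algebraMap ℝ (Cl p q) lam with hα
  set w : Fin (p + q) → ℝ := lam • x with hw
  set β : Cl p q := ι (Qpq p q) w with hβ
  have hαT : α ∈ Tset p q := by
    rcases Nat.eq_zero_or_pos (p + q) with h0 | hpos
    · haveI : IsEmpty (Fin (p + q)) := by rw [h0]; infer_instance
      have hQ0 : Qpq p q x = 0 := by
        rw [Qpq, QuadraticMap.weightedSumSquares_apply]
        simp
      have hl1 : lam = 1 := by
        rw [hlam, ht, hQ0]; norm_num
      rw [hα, hl1, map_one]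
      exact ⟨[], by simp⟩
    · exact scalar_mem_Tset p q hpos lam (le_of_lt hlampos)
  have hβT : β ∈ Tset p q := ⟨[w], by simp [hβ]⟩
  have hconjα : clConj α = α := by
    rw [clConj, hα, AlgHom.commutes, reverse.commutes]
  have hconjβ : clConj β = -β := by
    rw [clConj, hβ, involute_ι, map_neg, reverse_ι]
  have hQw : Qpq p q w = lam * lam * Qpq p q x := by
    rw [hw, QuadraticMap.map_smul, smul_eq_mul]; try ring
  have hββ : β * β = algebraMap ℝ _ (lam * lam * Qpq p q x) := by
    rw [hβ, ι_sq_scalar, hQw]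
  refine ⟨!![α, β; involute β, involute α], ⟨α, β, hαT, hβT, ?_, ?_, rfl⟩, ?_⟩
  · refine ⟨lam • w, ?_⟩
    rw [hβ, reverse_ι, hα, ← Algebra.smul_def, ← map_smul]
  · rw [hconjα, hconjβ, hα, ← map_mul, mul_neg, hββ, sub_neg_eq_add, ← map_add]
    rcases hnorm with hn | hn
    · left
      have : lam * lam + lam * lam * Qpq p q x = 1 := by rw [← hn, ht]; ring
      rw [this, map_one]
    · right
      have : lam * lam + lam * lam * Qpq p q x = -1 := by rw [← hn, ht]; ring
      rw [this, map_neg, map_one]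
  · have hunit : Ring.inverse (algebraMap ℝ (Cl p q) lam) = algebraMap ℝ _ lam⁻¹ :=
      Ring.inverse_unit ⟨algebraMap ℝ _ lam, algebraMap ℝ _ lam⁻¹,
        by rw [← map_mul, mul_inv_cancel₀ hlamne, map_one],
        by rw [← map_mul, inv_mul_cancel₀ hlamne, map_one]⟩
    show (α * ι (Qpq p q) 0 + β) * Ring.inverse (involute β * ι (Qpq p q) 0 + involute α)
        = ι (Qpq p q) x
    rw [map_zero, mul_zero, mul_zero, zero_add, zero_add]
    rw [hα, AlgHom.commutes, hunit, ← Algebra.commutes, ← Algebra.smul_def, hβ, ← map_smul,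
      hw, smul_smul, inv_mul_cancel₀ hlamne, one_smul]
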